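/- arXiv:0803.2213 — 4 statements merged into one kernel-verified Lean document; each statement's English description precedes it below -/
import Mathlib

section
/- For every vertex x of a finite simple graph, the equivalence class [x]_⊥ = {z ∈ X : z^⊥ = x^⊥} equals cl({x}) minus the union of the sets cl({y}) over all vertices y with cl({y}) strictly contained in cl({x}). In particular, if x is minimal in the sense that cl({y}) ⊆ cl({x}) implies cl({y}) = cl({x}), then [x]_⊥ = cl({x}). -/
def perp {V : Type*} (G : SimpleGraph V) (Y : Set V) : Set V :=
  {u | ∀ y ∈ Y, u = y ∨ G.Adj u y}

def cl {V : Type*} (G : SimpleGraph V) (Y : Set V) : Set V :=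
  perp G (perp G Y)

/-- The class `[x]_⊥` of vertices with the same orthogonal complement as `x`. -/
def clsPerp {V : Type*} (G : SimpleGraph V) (x : V) : Set V :=
  {z | perp G {z} = perp G {x}}

lemma mem_perp_singleton {V : Type*} (G : SimpleGraph V) (x u : V) :
    u ∈ perp G {x} ↔ u = x ∨ G.Adj u x := by
  simp [perp]

lemma mem_cl_singleton {V : Type*} (G : SimpleGraph V) (x z : V) :
    z ∈ cl G {x} ↔ perp G {x} ⊆ perp G {z} := by
  constructor
  · intro h u hu
    rcases h u hu with h' | h'
    · exact (mem_perp_singleton G z u).2 (Or.inl h'.symm)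
    · exact (mem_perp_singleton G z u).2 (Or.inr h'.symm)
  · intro h y hy
    rcases (mem_perp_singleton G z y).1 (h hy) with h' | h'
    · exact Or.inl h'.symm
    · exact Or.inr h'.symm

lemma self_mem_cl {V : Type*} (G : SimpleGraph V) (x : V) : x ∈ cl G {x} :=
  (mem_cl_singleton G x x).2 (subset_refl _)

lemma cl_subset_iff {V : Type*} (G : SimpleGraph V) (x y : V) :
    cl G {y} ⊆ cl G {x} ↔ perp G {x} ⊆ perp G {y} := by
  constructor
  · intro h
    exact (mem_cl_singleton G x y).1 (h (self_mem_cl G y))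
  · intro h z hz
    exact (mem_cl_singleton G x z).2 (h.trans ((mem_cl_singleton G y z).1 hz))

lemma perp_eq_iff_cl_eq {V : Type*} (G : SimpleGraph V) (x z : V) :
    perp G {z} = perp G {x} ↔ cl G {z} = cl G {x} := by
  constructor
  · intro h; unfold cl; rw [h]
  · intro h
    exact Set.Subset.antisymm ((cl_subset_iff G z x).1 h.ge) ((cl_subset_iff G x z).1 h.le)

theorem clsPerp_eq_cl_sdiff {V : Type*} [Fintype V] (G : SimpleGraph V) (x : V) :
    clsPerp G x = cl G {x} \ ⋃ y ∈ {y : V | cl G {y} ⊂ cl G {x}}, cl G {y} ∧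
    ((∀ y : V, cl G {y} ⊆ cl G {x} → cl G {y} = cl G {x}) →
      clsPerp G x = cl G {x}) := by
  have key : ∀ z : V, z ∈ clsPerp G x ↔ cl G {z} = cl G {x} := by
    intro z
    exact perp_eq_iff_cl_eq G x z
  constructor
  · ext z
    simp only [Set.mem_diff, Set.mem_iUnion, Set.mem_setOf_eq, not_exists, key]
    constructor
    · intro h
      refine ⟨h ▸ self_mem_cl G z, ?_⟩
      intro y hy hz
      have h1 : cl G {z} ⊆ cl G {y} :=
        (cl_subset_iff G y z).2 ((mem_cl_singleton G y z).1 hz)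
      exact hy.not_subset (h ▸ h1)
    · rintro ⟨hz, h⟩
      have h1 : cl G {z} ⊆ cl G {x} :=
        (cl_subset_iff G x z).2 ((mem_cl_singleton G x z).1 hz)
      by_contra hne
      exact h z ⟨h1, fun hh => hne (Set.Subset.antisymm h1 hh)⟩ (self_mem_cl G z)
  · intro hmin
    ext z
    rw [key]
    constructor
    · intro h; exact h ▸ self_mem_cl G z
    · intro hz
      exact hmin z ((cl_subset_iff G x z).2 ((mem_cl_singleton G x z).1 hz))
end

section
/- Let J, Tr_⊥ and V_⊥ be as defined. Then each element of J, each element of Tr_⊥, and each element of V_⊥ stabilizes G(Y) for every closed set Y; i.e., J, V_⊥ ⊆ St(L) and Tr_⊥ ⊆ St(L). -/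
/-- Relators of the right-angled Artin group on the graph `G`. -/
def raagRels {V : Type*} (G : SimpleGraph V) : Set (FreeGroup V) :=
  {r | ∃ x y : V, G.Adj x y ∧
    r = FreeGroup.of x * FreeGroup.of y * (FreeGroup.of x)⁻¹ * (FreeGroup.of y)⁻¹}

/-- The right-angled Artin group (partially commutative group) on the graph `G`. -/
abbrev Raag {V : Type*} (G : SimpleGraph V) := PresentedGroup (raagRels G)

/-- The generator of `Raag G` corresponding to a vertex. -/
def gen {V : Type*} (G : SimpleGraph V) (x : V) : Raag G := PresentedGroup.of x

/-- The canonical parabolic subgroup `G(Y)` generated by a subset of vertices. -/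
def parab {V : Type*} (G : SimpleGraph V) (Y : Set V) : Subgroup (Raag G) :=
  Subgroup.closure (gen G '' Y)

/-- The stabiliser `St(L)` of all parabolic subgroups of closed sets. -/
def StL {V : Type*} (G : SimpleGraph V) : Set (MulAut (Raag G)) :=
  {φ | ∀ Y : Set V, Y = cl G Y → (parab G Y).map φ.toMonoidHom = parab G Y}

/-- Automorphisms inverting some generators and fixing the rest. -/
def Jset {V : Type*} (G : SimpleGraph V) : Set (MulAut (Raag G)) :=
  {φ | ∀ x : V, φ (gen G x) = gen G x ∨ φ (gen G x) = (gen G x)⁻¹}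

/-- The transvections `tr_{x,y}` with `x^⊥ ⊊ y^⊥`. -/
def TrPerp {V : Type*} (G : SimpleGraph V) : Set (MulAut (Raag G)) :=
  {φ | ∃ x y : V, x ≠ y ∧ perp G {x} ⊂ perp G {y} ∧
    φ (gen G x) = gen G x * gen G y ∧ ∀ z : V, z ≠ x → φ (gen G z) = gen G z}

/-- Automorphisms acting within each class `[x]_⊥` (and fixing generators whose
class is a singleton): the subgroup `V_⊥`. -/
def VPerp {V : Type*} (G : SimpleGraph V) : Set (MulAut (Raag G)) :=
  {φ | ∀ x : V, φ (gen G x) ∈ parab G (clsPerp G x) ∧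
    (clsPerp G x = {x} → φ (gen G x) = gen G x)}

namespace RaagAux

variable {V : Type*} (G : SimpleGraph V)

lemma gen_mem {Y : Set V} {x : V} (hx : x ∈ Y) : gen G x ∈ parab G Y :=
  Subgroup.subset_closure ⟨x, hx, rfl⟩

lemma mem_perp_singleton {u x : V} : u ∈ perp G {x} ↔ u = x ∨ G.Adj u x := by
  simp [perp]

lemma self_mem_perp (x : V) : x ∈ perp G {x} := (mem_perp_singleton G).2 (Or.inl rfl)

lemma closed_mem {Y : Set V} (hY : Y = cl G Y) {x y : V} (hx : x ∈ Y)
    (h : perp G {x} ⊆ perp G {y}) : y ∈ Y := by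
  rw [hY]
  intro u hu
  have hux : u ∈ perp G {x} := (mem_perp_singleton G).2 (hu x hx)
  rcases (mem_perp_singleton G).1 (h hux) with h' | h'
  · exact Or.inl h'.symm
  · exact Or.inr h'.symm

lemma commute_gen {x y : V} (h : G.Adj x y) : Commute (gen G x) (gen G y) := by
  have hr : (FreeGroup.of x * FreeGroup.of y * (FreeGroup.of x)⁻¹ * (FreeGroup.of y)⁻¹ :
      FreeGroup V) ∈ raagRels G := ⟨x, y, h, rfl⟩
  have h1 : (QuotientGroup.mk (FreeGroup.of x * FreeGroup.of y * (FreeGroup.of x)⁻¹ *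
      (FreeGroup.of y)⁻¹) : Raag G) = 1 :=
    (QuotientGroup.eq_one_iff _).mpr (Subgroup.subset_normalClosure hr)
  have h2 : gen G x * gen G y * (gen G x)⁻¹ * (gen G y)⁻¹ = 1 := by
    exact h1
  rw [mul_inv_eq_one] at h2
  exact mul_inv_eq_iff_eq_mul.mp h2

lemma commute_gen_cls {x a b : V} (ha : a ∈ clsPerp G x) (hb : b ∈ clsPerp G x) :
    Commute (gen G a) (gen G b) := by
  rcases eq_or_ne a b with rfl | hne
  · exact Commute.refl _
  have hmem : a ∈ perp G {b} := by
    have h1 : a ∈ perp G {a} := self_mem_perp G a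
    rw [ha] at h1
    rw [hb]
    exact h1
  rcases (mem_perp_singleton G).1 hmem with h | h
  · exact absurd h hne
  · exact commute_gen G h

noncomputable def piAb : Raag G →* Multiplicative (V →₀ ℤ) :=
  PresentedGroup.toGroup (f := fun x => Multiplicative.ofAdd (Finsupp.single x (1 : ℤ))) (by
    rintro r ⟨x, y, -, rfl⟩
    simp only [map_mul, map_inv, FreeGroup.lift_apply_of]
    rw [mul_inv_eq_one, mul_inv_eq_iff_eq_mul, mul_comm])

@[simp] lemma piAb_gen (x : V) :
    piAb G (gen G x) = Multiplicative.ofAdd (Finsupp.single x (1 : ℤ)) :=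
  PresentedGroup.toGroup.of _

lemma piAb_support {S : Set V} {g : Raag G} (hg : g ∈ parab G S) {v : V} (hv : v ∉ S) :
    (Multiplicative.toAdd (piAb G g)) v = 0 := by
  induction hg using Subgroup.closure_induction with
  | mem g hgmem =>
    obtain ⟨z, hz, rfl⟩ := hgmem
    rw [piAb_gen, toAdd_ofAdd]
    exact Finsupp.single_eq_of_ne (by rintro rfl; exact hv hz)
  | one => simp
  | mul a b ha hb iha ihb => rw [map_mul, toAdd_mul, Finsupp.add_apply, iha, ihb, add_zero]
  | inv a ha iha => rw [map_inv, toAdd_inv, Finsupp.neg_apply, iha, neg_zero]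

lemma gen_generates (w : Raag G) : w ∈ Subgroup.closure (Set.range (gen G)) := by
  have : Set.range (gen G) = Set.range (PresentedGroup.of (rels := raagRels G)) := rfl
  rw [this, PresentedGroup.closure_range_of]
  trivial

noncomputable def PhiHom (φ : MulAut (Raag G)) : (V →₀ ℤ) →+ (V →₀ ℤ) :=
  Finsupp.liftAddHom
    (fun z => zmultiplesHom _ (Multiplicative.toAdd (piAb G (φ (gen G z)))))

lemma key (φ : MulAut (Raag G)) (w : Raag G) :
    piAb G (φ w) = Multiplicative.ofAdd (PhiHom G φ (Multiplicative.toAdd (piAb G w))) := by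
  have h : (piAb G).comp φ.toMonoidHom =
      ((AddMonoidHom.toMultiplicative (PhiHom G φ)) : Multiplicative (V →₀ ℤ) →*
        Multiplicative (V →₀ ℤ)).comp (piAb G) := by
    apply PresentedGroup.ext
    intro z
    show piAb G (φ (gen G z)) = AddMonoidHom.toMultiplicative (PhiHom G φ) (piAb G (gen G z))
    rw [piAb_gen]
    show piAb G (φ (gen G z)) =
      Multiplicative.ofAdd (PhiHom G φ (Finsupp.single z (1 : ℤ)))
    rw [PhiHom, Finsupp.liftAddHom_apply_single]
    simp
  exact DFunLike.congr_fun h w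


lemma PhiHom_apply (φ : MulAut (Raag G)) (f : V →₀ ℤ) :
    PhiHom G φ f =
      f.sum (fun z k => k • Multiplicative.toAdd (piAb G (φ (gen G z)))) := by
  rw [PhiHom, Finsupp.liftAddHom_apply]
  rfl

lemma vperp_exists (φ : MulAut (Raag G))
    (hφ : ∀ x : V, φ (gen G x) ∈ parab G (clsPerp G x)) (x : V) :
    ∃ g ∈ parab G (clsPerp G x), φ g = gen G x := by
  classical
  set C := clsPerp G x with hCdef
  have hxC : x ∈ C := by show perp G {x} = perp G {x}; rfl
  have hcls_eq : ∀ z ∈ C, clsPerp G z = C := by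
    intro z hz
    have hz' : perp G {z} = perp G {x} := hz
    ext w
    show perp G {w} = perp G {z} ↔ w ∈ C
    rw [hz']
    exact Iff.rfl
  have hdisj : ∀ z, z ∉ C → ∀ v ∈ C, v ∉ clsPerp G z := by
    intro z hz v hv hvz
    exact hz (show perp G {z} = perp G {x} by rw [← hvz]; exact hv)
  -- commutativity of parab C
  have hcomm : ∀ a ∈ parab G C, ∀ b ∈ parab G C, a * b = b * a := by
    intro a ha b hb
    refine Subgroup.closure_induction₂ (p := fun m n _ _ => Commute m n)
      ?_ ?_ ?_ ?_ ?_ ?_ ?_ ha hb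
    · rintro _ _ ⟨u, hu, rfl⟩ ⟨w, hw, rfl⟩
      exact commute_gen_cls G hu hw
    · exact fun m _ => Commute.one_left m
    · exact fun m _ => Commute.one_right m
    · exact fun m n o _ _ _ h1 h2 => h1.mul_left h2
    · exact fun m n o _ _ _ h1 h2 => h1.mul_right h2
    · exact fun m n _ _ h1 => h1.inv_left
    · exact fun m n _ _ h1 => h1.inv_right
  letI : CommGroup (parab G C) :=
    { (inferInstance : Group (parab G C)) with
      mul_comm := fun a b => Subtype.ext (hcomm a.1 a.2 b.1 b.2) }
  -- the product map P
  let h : V → ℤ → (parab G C) := fun z k =>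
    if hz : z ∈ C then (⟨gen G z, gen_mem G hz⟩ : parab G C) ^ k else 1
  let P : (V →₀ ℤ) → (parab G C) := fun f => f.prod h
  have hzero : ∀ z, h z 0 = 1 := by intro z; simp only [h]; split <;> simp
  have hadd : ∀ z k₁ k₂, h z (k₁ + k₂) = h z k₁ * h z k₂ := by
    intro z k₁ k₂; simp only [h]; split <;> simp [zpow_add]
  have hPadd : ∀ f f', P (f + f') = P f * P f' := fun f f' =>
    Finsupp.prod_add_index' hzero hadd
  have hP0 : P 0 = 1 := Finsupp.prod_zero_index
  have hPneg : ∀ f, P (-f) = (P f)⁻¹ := by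
    intro f
    have hh : P f * P (-f) = 1 := by rw [← hPadd, add_neg_cancel, hP0]
    exact eq_inv_of_mul_eq_one_right hh
  have hPsingle : ∀ z (hz : z ∈ C) (k : ℤ),
      P (Finsupp.single z k) = (⟨gen G z, gen_mem G hz⟩ : parab G C) ^ k := by
    intro z hz k
    rw [show P (Finsupp.single z k) = Finsupp.prod (Finsupp.single z k) h from rfl,
      Finsupp.prod_single_index (hzero z)]
    simp only [h, dif_pos hz]
  -- representation of elements of parab C
  have hrepr : ∀ g (hg : g ∈ parab G C),
      P (Multiplicative.toAdd (piAb G g)) = ⟨g, hg⟩ := by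
    intro g hg
    induction hg using Subgroup.closure_induction with
    | mem g hgmem =>
      obtain ⟨z, hz, rfl⟩ := hgmem
      rw [piAb_gen, toAdd_ofAdd, hPsingle z hz 1, zpow_one]
    | one => rw [map_one, toAdd_one, hP0]; rfl
    | mul a b ha hb iha ihb =>
      rw [map_mul, toAdd_mul, hPadd, iha, ihb]; rfl
    | inv a ha iha =>
      rw [map_inv, toAdd_inv, hPneg, iha]; rfl
  have hinj : ∀ a b, a ∈ parab G C → b ∈ parab G C → piAb G a = piAb G b → a = b := by
    intro a b ha hb hab
    have h1 := hrepr a ha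
    rw [hab, hrepr b hb] at h1
    exact Subtype.ext_iff.mp h1.symm
  -- piAb of P f
  have hπP : ∀ f : V →₀ ℤ, (∀ v ∈ f.support, v ∈ C) →
      piAb G ↑(P f) = Multiplicative.ofAdd f := by
    intro f hf
    have e1 : piAb G ↑(P f) = ((piAb G).comp (parab G C).subtype) (f.prod h) := rfl
    rw [e1, map_finsuppProd]
    have e2 : ∀ z ∈ f.support,
        ((piAb G).comp (parab G C).subtype) (h z (f z)) =
          Multiplicative.ofAdd (Finsupp.single z (f z)) := by
      intro z hz
      have hzC := hf z hz
      simp only [h, dif_pos hzC]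
      rw [show ((piAb G).comp (parab G C).subtype)
            ((⟨gen G z, gen_mem G hzC⟩ : parab G C) ^ (f z)) =
          (piAb G) ((gen G z) ^ (f z)) from rfl, map_zpow, piAb_gen, ← ofAdd_zsmul,
        Finsupp.smul_single, smul_eq_mul, mul_one]
    rw [Finsupp.prod_congr (g2 := fun z k => Multiplicative.ofAdd (Finsupp.single z k)) e2]
    rw [show (f.prod fun z k => Multiplicative.ofAdd (Finsupp.single z k)) =
        Multiplicative.ofAdd (f.sum Finsupp.single) from (ofAdd_sum _ _).symm,
      Finsupp.sum_single]
  -- support of images under PhiHom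
  have hb1 : ∀ z ∈ C, ∀ v, v ∉ C →
      (Multiplicative.toAdd (piAb G (φ (gen G z)))) v = 0 := by
    intro z hz v hv
    have hm := hφ z
    rw [hcls_eq z hz] at hm
    exact piAb_support G hm hv
  have hb2 : ∀ z, z ∉ C → ∀ v ∈ C,
      (Multiplicative.toAdd (piAb G (φ (gen G z)))) v = 0 := by
    intro z hz v hv
    exact piAb_support G (hφ z) (hdisj z hz v hv)
  have hΦzero : ∀ (f : V →₀ ℤ) (v : V),
      (∀ z ∈ f.support, (Multiplicative.toAdd (piAb G (φ (gen G z)))) v = 0) →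
      PhiHom G φ f v = 0 := by
    intro f v hf
    rw [PhiHom_apply, Finsupp.sum, Finsupp.finset_sum_apply]
    apply Finset.sum_eq_zero
    intro z hz
    rw [Finsupp.smul_apply, hf z hz, smul_zero]
  -- surjectivity of piAb
  have hsurj : ∀ f : V →₀ ℤ, ∃ w : Raag G, piAb G w = Multiplicative.ofAdd f := by
    intro f
    induction f using Finsupp.induction with
    | zero => exact ⟨1, by simp⟩
    | single_add a b f _ _ ih =>
      obtain ⟨w, hw⟩ := ih
      refine ⟨gen G a ^ b * w, ?_⟩
      rw [map_mul, map_zpow, piAb_gen, hw, ← ofAdd_zsmul, ← ofAdd_add,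
        Finsupp.smul_single, smul_eq_mul, mul_one]
  obtain ⟨w₀, hw₀⟩ := hsurj (Finsupp.single x 1)
  have hφw : piAb G (φ (φ.symm w₀)) = Multiplicative.ofAdd (Finsupp.single x (1 : ℤ)) := by
    rw [MulEquiv.apply_symm_apply]
    exact hw₀
  set w := φ.symm w₀ with hwdef
  set F := Multiplicative.toAdd (piAb G w) with hFdef
  have hΦF : PhiHom G φ F = Finsupp.single x 1 := by
    have hk := key G φ w
    rw [hφw] at hk
    exact (Multiplicative.ofAdd.injective hk).symm
  set F₁ := F.filter (· ∈ C) with hF1def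
  set F₂ := F.filter (fun z => ¬ z ∈ C) with hF2def
  have hsplit : F₁ + F₂ = F := Finsupp.filter_pos_add_filter_neg F _
  have hs1 : ∀ z ∈ F₁.support, z ∈ C := by
    intro z hz
    rw [hF1def, Finsupp.support_filter] at hz
    exact (Finset.mem_filter.mp hz).2
  have hs2 : ∀ z ∈ F₂.support, z ∉ C := by
    intro z hz
    rw [hF2def, Finsupp.support_filter] at hz
    exact (Finset.mem_filter.mp hz).2
  have h1 : ∀ v, v ∉ C → PhiHom G φ F₁ v = 0 := fun v hv =>
    hΦzero F₁ v (fun z hz => hb1 z (hs1 z hz) v hv)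
  have h2 : ∀ v, v ∈ C → PhiHom G φ F₂ v = 0 := fun v hv =>
    hΦzero F₂ v (fun z hz => hb2 z (hs2 z hz) v hv)
  have hF₁ : PhiHom G φ F₁ = Finsupp.single x 1 := by
    ext v
    by_cases hv : v ∈ C
    · have hadd' : PhiHom G φ F₁ v + PhiHom G φ F₂ v = Finsupp.single x 1 v := by
        rw [← Finsupp.add_apply, ← map_add, hsplit, hΦF]
      rw [h2 v hv, add_zero] at hadd'
      exact hadd'
    · rw [h1 v hv]
      exact (Finsupp.single_eq_of_ne (by rintro rfl; exact hv hxC)).symm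
  -- φ maps parab C to itself
  have hmapH : ∀ g ∈ parab G C, φ g ∈ parab G C := by
    intro g hg
    induction hg using Subgroup.closure_induction with
    | mem g hgmem =>
      obtain ⟨z, hz, rfl⟩ := hgmem
      have hm := hφ z
      rwa [hcls_eq z hz] at hm
    | one => rw [map_one]; exact one_mem _
    | mul a b _ _ iha ihb => rw [map_mul]; exact mul_mem iha ihb
    | inv a _ iha => rw [map_inv]; exact inv_mem iha
  refine ⟨↑(P F₁), (P F₁).2, ?_⟩
  apply hinj _ _ (hmapH _ (P F₁).2) (gen_mem G hxC)
  rw [key G φ ↑(P F₁), hπP F₁ hs1, toAdd_ofAdd, hF₁, piAb_gen]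


lemma cls_subset {Y : Set V} (hY : Y = cl G Y) {x : V} (hx : x ∈ Y) :
    clsPerp G x ⊆ Y := fun z hz =>
  closed_mem G hY hx (hz : perp G {z} = perp G {x}).symm.subset

lemma stl_of (φ : MulAut (Raag G))
    (h1 : ∀ Y : Set V, Y = cl G Y → ∀ x ∈ Y, φ (gen G x) ∈ parab G Y)
    (h2 : ∀ Y : Set V, Y = cl G Y → ∀ x ∈ Y, ∃ g ∈ parab G Y, φ g = gen G x) :
    φ ∈ StL G := by
  intro Y hY
  apply le_antisymm
  · rw [parab, MonoidHom.map_closure]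
    refine (Subgroup.closure_le _).mpr ?_
    rintro _ ⟨_, ⟨z, hz, rfl⟩, rfl⟩
    exact h1 Y hY z hz
  · show parab G Y ≤ _
    rw [parab]
    refine (Subgroup.closure_le _).mpr ?_
    rintro _ ⟨z, hz, rfl⟩
    obtain ⟨g, hgY, hgeq⟩ := h2 Y hY z hz
    exact ⟨g, hgY, hgeq⟩

end RaagAux

theorem J_VPerp_TrPerp_subset_StL {V : Type*} [Fintype V] (G : SimpleGraph V) :
    Jset G ⊆ StL G ∧ VPerp G ⊆ StL G ∧ TrPerp G ⊆ StL G := by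
  refine ⟨?_, ?_, ?_⟩
  · intro φ hφ
    apply RaagAux.stl_of G φ
    · intro Y hY x hx
      rcases hφ x with h | h
      · rw [h]; exact RaagAux.gen_mem G hx
      · rw [h]; exact inv_mem (RaagAux.gen_mem G hx)
    · intro Y hY x hx
      rcases hφ x with h | h
      · exact ⟨gen G x, RaagAux.gen_mem G hx, h⟩
      · exact ⟨(gen G x)⁻¹, inv_mem (RaagAux.gen_mem G hx), by rw [map_inv, h, inv_inv]⟩
  · intro φ hφ
    apply RaagAux.stl_of G φ
    · intro Y hY x hx
      exact Subgroup.closure_mono (Set.image_mono (RaagAux.cls_subset G hY hx)) ((hφ x).1)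
    · intro Y hY x hx
      obtain ⟨g, hg, hgeq⟩ := RaagAux.vperp_exists G φ (fun z => (hφ z).1) x
      exact ⟨g, Subgroup.closure_mono (Set.image_mono (RaagAux.cls_subset G hY hx)) hg, hgeq⟩
  · intro φ hφ
    obtain ⟨x₀, y₀, hne, hss, hx₀, hfix⟩ := hφ
    apply RaagAux.stl_of G φ
    · intro Y hY x hx
      by_cases hxx : x = x₀
      · subst hxx
        have hy : y₀ ∈ Y := RaagAux.closed_mem G hY hx hss.subset
        rw [hx₀]
        exact mul_mem (RaagAux.gen_mem G hx) (RaagAux.gen_mem G hy)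
      · rw [hfix x hxx]; exact RaagAux.gen_mem G hx
    · intro Y hY x hx
      by_cases hxx : x = x₀
      · subst hxx
        have hy : y₀ ∈ Y := RaagAux.closed_mem G hY hx hss.subset
        refine ⟨gen G x * (gen G y₀)⁻¹,
          mul_mem (RaagAux.gen_mem G hx) (inv_mem (RaagAux.gen_mem G hy)), ?_⟩
        rw [map_mul, map_inv, hx₀, hfix y₀ hne.symm, mul_inv_cancel_right]
      · exact ⟨gen G x, RaagAux.gen_mem G hx, hfix x hxx⟩
end

section
/- The map π : St(L) → GL(|X|, ℤ) sending an automorphism φ to the matrix [φ] of exponents (x_i^φ = x₁^{a_{i,1}} ⋯ x_k^{a_{i,k}}) is an injective group homomorphism. -/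
/-- The map `π : St(L) → GL(|X|,ℤ)`, `φ ↦ [φ]`, where
`x^φ = x₁^{a_{x,1}} ⋯ x_k^{a_{x,k}}` (with `x₁ ≺ ⋯ ≺ x_k` an enumeration of the
vertices, and all factors appearing lying in the free abelian subgroup
`G(cl{x})`), is an injective group homomorphism. -/
theorem matrix_rep_injective_hom {V : Type*} [Fintype V] (G : SimpleGraph V)
    (n : ℕ) (e : Fin n ≃ V)  -- an enumeration x₁, …, x_k of the vertices
    (M : MulAut (Raag G) → Matrix V V ℤ)
    (hM : ∀ φ ∈ StL G, ∀ x : V,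
      φ (gen G x) =
        (((List.finRange n).map fun i => gen G (e i) ^ M φ x (e i))).prod)
    (hM0 : ∀ φ ∈ StL G, ∀ x y : V, y ∉ cl G {x} → M φ x y = 0) :
    (∀ φ ∈ StL G, ∀ ψ ∈ StL G, φ.trans ψ ∈ StL G →
      M (φ.trans ψ) = M φ * M ψ) ∧
    (∀ φ ∈ StL G, ∀ ψ ∈ StL G, M φ = M ψ → φ = ψ) := by
  classical
  -- Abelianization homomorphism to `Multiplicative (V → ℤ)`.
  have hrel : ∀ r ∈ raagRels G,
      (FreeGroup.lift fun v => Multiplicative.ofAdd (Pi.single v (1:ℤ) : V → ℤ)) r = 1 := by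
    rintro r ⟨x, y, hxy, rfl⟩
    simp only [map_mul, map_inv, FreeGroup.lift_apply_of]
    rw [← commutatorElement_def, commutatorElement_eq_one_iff_commute]
    exact Commute.all _ _
  set ab : Raag G →* Multiplicative (V → ℤ) := PresentedGroup.toGroup hrel with hab_def
  have hab : ∀ v : V, ab (gen G v) = Multiplicative.ofAdd (Pi.single v (1:ℤ)) := by
    intro v; exact PresentedGroup.toGroup.of hrel
  -- abelianization of a standard product of powers of generators
  have habP : ∀ c : V → ℤ,
      ab (((List.finRange n).map fun i => gen G (e i) ^ c (e i)).prod)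
        = Multiplicative.ofAdd c := by
    intro c
    rw [map_list_prod, List.map_map, ← Fin.prod_univ_def]
    have : ∀ i : Fin n, (ab ∘ fun i : Fin n => gen G (e i) ^ c (e i)) i
        = Multiplicative.ofAdd (Pi.single (e i) (c (e i))) := by
      intro i
      simp only [Function.comp_apply, map_zpow, hab, ← ofAdd_zsmul]
      congr 1
      ext v
      by_cases h : v = e i
      · subst h; simp
      · simp [h]
    rw [Finset.prod_congr rfl fun i _ => this i]
    rw [← ofAdd_sum]
    congr 1
    rw [Equiv.sum_comp e (fun v => Pi.single v (c v))]
    exact Finset.univ_sum_single c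
  -- abelianized value of φ on a generator
  have key : ∀ φ ∈ StL G, ∀ x : V, ab (φ (gen G x)) = Multiplicative.ofAdd (M φ x) := by
    intro φ hφ x
    rw [hM φ hφ x, habP]
  constructor
  · intro φ hφ ψ hψ hφψ
    ext x v
    have h1 : ab ((φ.trans ψ) (gen G x)) = Multiplicative.ofAdd (M (φ.trans ψ) x) :=
      key _ hφψ x
    have h2 : ab ((φ.trans ψ) (gen G x)) = Multiplicative.ofAdd ((M φ * M ψ) x) := by
      have : (φ.trans ψ) (gen G x) = ψ (φ (gen G x)) := rfl
      rw [this, hM φ hφ x, map_list_prod, map_list_prod, List.map_map, List.map_map,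
        ← Fin.prod_univ_def]
      have step : ∀ i : Fin n,
          ab (ψ (gen G (e i) ^ M φ x (e i)))
            = Multiplicative.ofAdd (M φ x (e i) • M ψ (e i)) := by
        intro i
        simp only [map_zpow, key ψ hψ (e i), ← ofAdd_zsmul]
      simp only [Function.comp_apply]
      rw [Finset.prod_congr rfl fun i _ => step i, ← ofAdd_sum]
      congr 1
      ext v
      rw [Matrix.mul_apply]
      have := Equiv.sum_comp e (fun j => M φ x j * M ψ j v)
      simp only [Finset.sum_apply, Pi.smul_apply, smul_eq_mul]
      rw [this]
    have := h1.symm.trans h2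
    have hv : M (φ.trans ψ) x = (M φ * M ψ) x := Multiplicative.ofAdd.injective this
    exact congrFun hv v
  · intro φ hφ ψ hψ hMeq
    have : ∀ x : V, φ (gen G x) = ψ (gen G x) := by
      intro x
      rw [hM φ hφ x, hM ψ hψ x, hMeq]
    apply MulEquiv.toMonoidHom_injective
    apply PresentedGroup.ext
    intro x
    exact this x
end

section
/- Every elementary conjugating automorphism α_C(x) of a right-angled Artin group G lies in the conjugate-stabiliser St^conj(L): for every closed set V, either G(V)^{α_C(x)} = G(V) or G(V)^{α_C(x)} = x^{-1} G(V) x. Key step: if V = T^⊥ is closed with x ∉ V, then all vertices of V \ x^⊥ lie in a single connected component of Γ minus x^⊥. -/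
/-- Adjacent generators commute. -/
lemma gen_comm {V : Type*} (G : SimpleGraph V) {a b : V} (h : G.Adj a b) :
    gen G a * gen G b = gen G b * gen G a := by
  have h1 : gen G a * gen G b * (gen G a)⁻¹ * (gen G b)⁻¹ = 1 := by
    have : gen G a * gen G b * (gen G a)⁻¹ * (gen G b)⁻¹ =
        PresentedGroup.mk (raagRels G)
          (FreeGroup.of a * FreeGroup.of b * (FreeGroup.of a)⁻¹ * (FreeGroup.of b)⁻¹) := by
      simp [gen, PresentedGroup.of]
    rw [this]
    have hmem : (FreeGroup.of a * FreeGroup.of b * (FreeGroup.of a)⁻¹ * (FreeGroup.of b)⁻¹)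
        ∈ Subgroup.normalClosure (raagRels G) :=
      Subgroup.subset_normalClosure ⟨a, b, h, rfl⟩
    exact (QuotientGroup.eq_one_iff _).mpr hmem
  have h2 : gen G a * gen G b =
      (gen G a * gen G b * (gen G a)⁻¹ * (gen G b)⁻¹) * (gen G b * gen G a) := by group
  rw [h1, one_mul] at h2
  exact h2

/-- If `φ` and `φ⁻¹` send generators of `W` into `parab G W`, the map fixes it. -/
lemma map_parab_eq {V : Type*} (G : SimpleGraph V) (φ : MulAut (Raag G)) (W : Set V)
    (h1 : ∀ y ∈ W, φ (gen G y) ∈ parab G W)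
    (h2 : ∀ y ∈ W, φ⁻¹ (gen G y) ∈ parab G W) :
    (parab G W).map φ.toMonoidHom = parab G W := by
  rw [parab, MonoidHom.map_closure]
  apply le_antisymm
  · rw [Subgroup.closure_le]
    rintro _ ⟨_, ⟨y, hy, rfl⟩, rfl⟩
    exact h1 y hy
  · rw [Subgroup.closure_le]
    rintro _ ⟨y, hy, rfl⟩
    have : gen G y = φ.toMonoidHom (φ⁻¹ (gen G y)) := by simp
    rw [this]
    rw [← MonoidHom.map_closure]
    exact Subgroup.mem_map_of_mem _ (h2 y hy)

/-- Every elementary conjugating automorphism `α_C(x)` lies in the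
conjugate-stabiliser `St^conj(L)`: for every closed set `W`, either it fixes
`G(W)` or it maps `G(W)` to `x⁻¹ G(W) x`. -/
theorem elementary_conjugating_in_StConj {V : Type*} [Fintype V]
    (G : SimpleGraph V) (x : V) (C : Set V)
    -- `C` is a connected component of `Γ` with the vertices `x^⊥` removed:
    (hC1 : C ⊆ (perp G {x})ᶜ)
    (hC2 : ∀ u ∈ C, ∀ v ∈ (perp G {x})ᶜ, G.Adj u v → v ∈ C)
    (hC3 : ∀ u v : ((perp G {x})ᶜ : Set V), (u : V) ∈ C → (v : V) ∈ C →
      (G.induce ((perp G {x})ᶜ)).Reachable u v)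
    -- `φ = α_C(x)` conjugates the generators in `C` by `x` and fixes the rest:
    (φ : MulAut (Raag G))
    (hφ1 : ∀ y ∈ C, φ (gen G y) = (gen G x)⁻¹ * gen G y * gen G x)
    (hφ2 : ∀ y : V, y ∉ C → φ (gen G y) = gen G y) :
    ∀ W : Set V, W = cl G W →
      (parab G W).map φ.toMonoidHom = parab G W ∨
      (parab G W).map φ.toMonoidHom =
        (parab G W).map (MulAut.conj (gen G x)⁻¹).toMonoidHom := by
  intro W hW
  have hxC : x ∉ C := fun hx => hC1 hx (fun y hy => Or.inl hy.symm)
  -- behaviour of φ on a generator commuting with x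
  have hcomm : ∀ y ∈ perp G {x}, gen G x * gen G y = gen G y * gen G x := by
    intro y hy
    rcases hy x rfl with h | h
    · rw [h]
    · exact gen_comm G h.symm
  by_cases hA : ∀ y ∈ W, y ∈ perp G {x} ∪ C
  · -- `φ` acts as conjugation by `x⁻¹` on all generators of `W`.
    right
    rw [parab, MonoidHom.map_closure, MonoidHom.map_closure]
    congr 1
    apply Set.image_congr
    rintro _ ⟨y, hy, rfl⟩
    simp only [MulEquiv.coe_toMonoidHom, MulAut.conj_apply, inv_inv]
    rcases hA y hy with h | h
    · have hyC : y ∉ C := fun hc => hC1 hc h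
      rw [hφ2 y hyC]
      have := hcomm y h
      rw [mul_assoc, ← this]; group
    · rw [hφ1 y h]
  · left
    push_neg at hA
    obtain ⟨v, hvW, hv⟩ := hA
    rw [Set.mem_union] at hv
    push_neg at hv
    obtain ⟨hvp, hvC⟩ := hv
    by_cases hWC : ∃ u ∈ W, u ∈ C
    · -- mixed case: then `x ∈ W`.
      obtain ⟨u, huW, huC⟩ := hWC
      have hxW : x ∈ W := by
        rw [hW]
        intro t ht
        -- `t` is adjacent (or equal) to both `u` and `v`; show `t ∈ perp {x}`.
        by_contra hcon
        push_neg at hcon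
        have htp : t ∈ (perp G {x})ᶜ := by
          intro htmem
          rcases htmem x rfl with h | h
          · exact hcon.1 h.symm
          · exact hcon.2 h.symm
        have htu := ht u huW
        have htv := ht v hvW
        have huv : u ≠ v := fun h => hvC (h ▸ huC)
        have htC : t ∈ C := by
          rcases htu with h | h
          · -- t = u
            subst h
            rcases htv with h' | h' 
            · exact absurd h' huv
            · exact huC
          · exact hC2 u huC t htp h.symm
        rcases htv with h | h
        · exact hvC (h ▸ htC)
        · exact hvC (hC2 t htC v hvp h)
      -- now `gen G x ∈ parab G W`, and images of generators stay in `parab G W`.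
      have hgx : gen G x ∈ parab G W := Subgroup.subset_closure ⟨x, hxW, rfl⟩
      have hφx : φ (gen G x) = gen G x := hφ2 x hxC
      apply map_parab_eq
      · intro y hyW
        have hgy : gen G y ∈ parab G W := Subgroup.subset_closure ⟨y, hyW, rfl⟩
        by_cases hyC : y ∈ C
        · rw [hφ1 y hyC]
          exact mul_mem (mul_mem (inv_mem hgx) hgy) hgx
        · rw [hφ2 y hyC]
          exact hgy
      · intro y hyW
        have hgy : gen G y ∈ parab G W := Subgroup.subset_closure ⟨y, hyW, rfl⟩
        by_cases hyC : y ∈ C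
        · have : φ⁻¹ (gen G y) = gen G x * gen G y * (gen G x)⁻¹ := by
            apply φ.injective
            rw [MulAut.apply_inv_self]
            simp only [map_mul, map_inv, hφ1 y hyC, hφx]
            group
          rw [this]
          exact mul_mem (mul_mem hgx hgy) (inv_mem hgx)
        · have : φ⁻¹ (gen G y) = gen G y := by
            apply φ.injective
            rw [MulAut.apply_inv_self, hφ2 y hyC]
          rw [this]
          exact hgy
    · -- `W` misses `C`: `φ` fixes all generators of `W`.
      push_neg at hWC
      apply map_parab_eq
      · intro y hyW
        rw [hφ2 y (hWC y hyW)]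
        exact Subgroup.subset_closure ⟨y, hyW, rfl⟩
      · intro y hyW
        have : φ⁻¹ (gen G y) = gen G y := by
          apply φ.injective
          rw [MulAut.apply_inv_self, hφ2 y (hWC y hyW)]
        rw [this]
        exact Subgroup.subset_closure ⟨y, hyW, rfl⟩
end
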